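/- Let G = G_1 × ⋯ × G_r be a direct product of finite groups, p a prime, and H a subgroup of G. For 1 ≤ j ≤ r+1 let N_j denote the normal subgroup of G consisting of all tuples whose components in the first j−1 coordinates are trivial (so N_1 = G and N_{r+1} = 1). Then for any two Sylow p-subgroups P and Q of H, the sets { j ∈ {1,…,r} : P ∩ N_j ≠ P ∩ N_{j+1} } and { j ∈ {1,…,r} : Q ∩ N_j ≠ Q ∩ N_{j+1} } are equal. (Hence the invariant I^p(H) given by this set is well-defined, independent of the choice of Sylow p-subgroup of H.) -/
import Mathlib


/-- In a direct product `G₁ × ⋯ × Gᵣ`, the (normal) subgroup of tuples whose first `j`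
components (those of index `< j`) are trivial. -/
def firstCoordsTrivial {r : ℕ} (Gs : Fin r → Type*) [∀ i, Group (Gs i)] (j : ℕ) :
    Subgroup (∀ i, Gs i) where
  carrier := {g | ∀ i : Fin r, (i : ℕ) < j → g i = 1}
  one_mem' := fun _ _ => rfl
  mul_mem' := by
    intro a b ha hb i hi
    simp [Pi.mul_apply, ha i hi, hb i hi]
  inv_mem' := by
    intro a ha i hi
    simp [Pi.inv_apply, ha i hi]

open Subgroup Pointwise

instance firstCoordsTrivial_normal {r : ℕ} (Gs : Fin r → Type*) [∀ i, Group (Gs i)] (j : ℕ) :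
    (firstCoordsTrivial Gs j).Normal := by
  constructor
  intro n hn g i hi
  simp [Pi.mul_apply, Pi.inv_apply, hn i hi]

theorem conj_smul_normal {G : Type*} [Group G] (N : Subgroup G) [N.Normal] (c : G) :
    MulAut.conj c • N = N := by
  ext x
  rw [mem_pointwise_smul_iff_inv_smul_mem]
  constructor
  · intro h
    have := ‹N.Normal›.conj_mem _ h c
    simpa [MulAut.smul_def, MulAut.conj_inv_apply, mul_assoc] using this
  · intro h
    have := ‹N.Normal›.conj_mem _ h c⁻¹
    simpa [MulAut.smul_def, MulAut.conj_inv_apply, mul_assoc] using this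

/-- The set of "pivot coordinates" of a Sylow `p`-subgroup of a subgroup `H` of a direct
product of finite groups does not depend on the choice of the Sylow subgroup; hence the
invariant `Iᵖ(H)` is well-defined. -/
theorem pivot_coords_independent_of_sylow
    {r : ℕ} (Gs : Fin r → Type*) [∀ i, Group (Gs i)] [∀ i, Finite (Gs i)]
    (p : ℕ) (hp : p.Prime) (H : Subgroup (∀ i, Gs i)) (P Q : Sylow p H) :
    {j : Fin r | ((P : Subgroup H).map H.subtype) ⊓ firstCoordsTrivial Gs j ≠
        ((P : Subgroup H).map H.subtype) ⊓ firstCoordsTrivial Gs ((j : ℕ) + 1)} =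
      {j : Fin r | ((Q : Subgroup H).map H.subtype) ⊓ firstCoordsTrivial Gs j ≠
        ((Q : Subgroup H).map H.subtype) ⊓ firstCoordsTrivial Gs ((j : ℕ) + 1)} := by
  haveI : Fact p.Prime := ⟨hp⟩
  obtain ⟨g, hg⟩ := MulAction.exists_smul_eq H P Q
  have key : (Q : Subgroup H).map H.subtype =
      MulAut.conj (g : ∀ i, Gs i) • ((P : Subgroup H).map H.subtype) := by
    rw [← hg]
    ext x
    simp only [Subgroup.mem_map, mem_pointwise_smul_iff_inv_smul_mem]
    constructor
    · rintro ⟨y, hy, rfl⟩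
      rw [Sylow.coe_subgroup_smul, mem_pointwise_smul_iff_inv_smul_mem] at hy
      exact ⟨(MulAut.conj g)⁻¹ y, hy, by
        simp [MulAut.smul_def, MulAut.conj_inv_apply, mul_assoc]⟩
    · rintro ⟨y, hy, hyx⟩
      refine ⟨MulAut.conj g y, ?_, ?_⟩
      · rw [Sylow.coe_subgroup_smul, mem_pointwise_smul_iff_inv_smul_mem]
        simpa [MulAut.smul_def, MulAut.conj_inv_apply, MulAut.conj_apply, mul_assoc] using hy
      · have h2 : (y : ∀ i, Gs i) = (g : ∀ i, Gs i)⁻¹ * x * g := by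
          simpa [MulAut.smul_def, MulAut.conj_inv_apply] using hyx
        simp [MulAut.conj_apply, Subgroup.coe_subtype, Subgroup.coe_mul, h2, mul_assoc]
  ext j
  simp only [Set.mem_setOf_eq, key, not_iff_not]
  have h1 : ∀ k : ℕ, MulAut.conj (g : ∀ i, Gs i) • ((P : Subgroup H).map H.subtype) ⊓
      firstCoordsTrivial Gs k =
      MulAut.conj (g : ∀ i, Gs i) • (((P : Subgroup H).map H.subtype) ⊓
        firstCoordsTrivial Gs k) := by
    intro k
    rw [smul_inf, conj_smul_normal (firstCoordsTrivial Gs k)]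
  rw [h1, h1, smul_left_cancel_iff]
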